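/- Let P, Q ∈ ℂ[X] and let z ∈ ℂ be a point where |P(z)|² + |Q(z)|² > 0. Then, on the open set where |P|² + |Q|² > 0 (so that log(|P|² + |Q|²) is smooth there), one has the pointwise identity (1/4)·Δ log(|P|² + |Q|²)(z) = |P'(z)·Q(z) − P(z)·Q'(z)|² / (|P(z)|² + |Q(z)|²)². -/

import Mathlib

open Polynomial

open Topology Filter Complex in
private lemma polyHasFDerivAt (R : Polynomial ℂ) (w : ℂ) :
    HasFDerivAt (fun x => R.eval x)
      (((1 : ℂ →L[ℂ] ℂ).smulRight (R.derivative.eval w)).restrictScalars ℝ) w :=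
  ((R.hasDerivAt w).hasFDerivAt).restrictScalars ℝ

private lemma conjMulHasFDerivAt (R S : Polynomial ℂ) (w : ℂ) :
    ∃ L : ℂ →L[ℝ] ℂ,
      HasFDerivAt (fun x => (starRingEnd ℂ) (R.eval x) * S.eval x) L w ∧
      ∀ v : ℂ, L v = (starRingEnd ℂ) (R.derivative.eval w) * (starRingEnd ℂ) v * S.eval w
        + (starRingEnd ℂ) (R.eval w) * (S.derivative.eval w * v) := by
  have hR : HasFDerivAt (fun x => (starRingEnd ℂ) (R.eval x))
      (Complex.conjCLE.toContinuousLinearMap.comp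
        (((1 : ℂ →L[ℂ] ℂ).smulRight (R.derivative.eval w)).restrictScalars ℝ)) w :=
    Complex.conjCLE.toContinuousLinearMap.hasFDerivAt.comp w (polyHasFDerivAt R w)
  have hS := polyHasFDerivAt S w
  refine ⟨_, hR.mul hS, fun v => ?_⟩
  simp [ContinuousLinearMap.smul_apply, smul_eq_mul, map_mul]
  ring

private lemma uHasFDerivAt (P Q : Polynomial ℂ) (w : ℂ) :
    ∃ L : ℂ →L[ℝ] ℝ,
      HasFDerivAt (fun x => ‖P.eval x‖ ^ 2 + ‖Q.eval x‖ ^ 2) L w ∧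
      L 1 = 2 * (((starRingEnd ℂ) (P.eval w) * P.derivative.eval w
          + (starRingEnd ℂ) (Q.eval w) * Q.derivative.eval w)).re ∧
      L Complex.I = (-2) * (((starRingEnd ℂ) (P.eval w) * P.derivative.eval w
          + (starRingEnd ℂ) (Q.eval w) * Q.derivative.eval w)).im := by
  obtain ⟨LP, hLP, eP⟩ := conjMulHasFDerivAt P P w
  obtain ⟨LQ, hLQ, eQ⟩ := conjMulHasFDerivAt Q Q w
  have hsum := Complex.reCLM.hasFDerivAt.comp w (hLP.add hLQ)
  have hfun : (fun x => ((starRingEnd ℂ) (P.eval x) * P.eval x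
      + (starRingEnd ℂ) (Q.eval x) * Q.eval x).re)
      = fun x => ‖P.eval x‖ ^ 2 + ‖Q.eval x‖ ^ 2 := by
    funext x
    simp [Complex.sq_norm, Complex.normSq_apply, Complex.mul_re]
  simp only [Function.comp_def, Complex.reCLM_apply, Pi.add_apply] at hsum
  rw [hfun] at hsum
  refine ⟨_, hsum, ?_, ?_⟩ <;>
  · simp [ContinuousLinearMap.add_apply, eP, eQ, Complex.mul_re, Complex.mul_im]
    ring

/-- The Laplacian on ℝ² ≅ ℂ. -/
noncomputable def lap (ψ : ℂ → ℝ) (z : ℂ) : ℝ :=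
  fderiv ℝ (fun w => fderiv ℝ ψ w 1) z 1 +
  fderiv ℝ (fun w => fderiv ℝ ψ w Complex.I) z Complex.I

open Topology Filter

/-- at every point z with |P(z)|² + |Q(z)|² > 0,
(1/4)·Δ log(|P|² + |Q|²)(z) = |P'(z)Q(z) − P(z)Q'(z)|² / (|P(z)|² + |Q(z)|²)². -/
theorem stmt6 (P Q : Polynomial ℂ) (z : ℂ)
    (h : 0 < ‖P.eval z‖ ^ 2 + ‖Q.eval z‖ ^ 2) :
    (1 / 4) * lap (fun w =>
        Real.log (‖P.eval w‖ ^ 2 + ‖Q.eval w‖ ^ 2)) z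
      = ‖P.derivative.eval z * Q.eval z - P.eval z * Q.derivative.eval z‖ ^ 2 /
        (‖P.eval z‖ ^ 2 + ‖Q.eval z‖ ^ 2) ^ 2 := by
  classical
  set u : ℂ → ℝ := fun w => ‖P.eval w‖ ^ 2 + ‖Q.eval w‖ ^ 2 with hudef
  set ψ : ℂ → ℝ := fun w => Real.log (u w) with hψdef
  set α : ℂ → ℂ := fun w => (starRingEnd ℂ) (P.eval w) * P.derivative.eval w
      + (starRingEnd ℂ) (Q.eval w) * Q.derivative.eval w with hαdef
  have hcont : Continuous u := by
    apply Continuous.add <;> exact ((continuous_norm.comp (Polynomial.continuous _)).pow 2)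
  have hev : ∀ᶠ w in 𝓝 z, 0 < u w := (hcont.tendsto z).eventually (eventually_gt_nhds h)
  have h1 : (fun w => fderiv ℝ ψ w 1) =ᶠ[𝓝 z] (fun w => (u w)⁻¹ * (2 * (α w).re)) := by
    filter_upwards [hev] with w hw
    obtain ⟨L, hL, hL1, hLI⟩ := uHasFDerivAt P Q w
    have hψw : HasFDerivAt ψ ((u w)⁻¹ • L) w := by
      exact (Real.hasDerivAt_log hw.ne').comp_hasFDerivAt w hL
    rw [hψw.fderiv, ContinuousLinearMap.smul_apply, hL1, smul_eq_mul]
  have h2 : (fun w => fderiv ℝ ψ w Complex.I) =ᶠ[𝓝 z]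
      (fun w => (u w)⁻¹ * ((-2) * (α w).im)) := by
    filter_upwards [hev] with w hw
    obtain ⟨L, hL, hL1, hLI⟩ := uHasFDerivAt P Q w
    have hψw : HasFDerivAt ψ ((u w)⁻¹ • L) w := by
      exact (Real.hasDerivAt_log hw.ne').comp_hasFDerivAt w hL
    rw [hψw.fderiv, ContinuousLinearMap.smul_apply, hLI, smul_eq_mul]
  -- second derivatives at z
  obtain ⟨L1, hc1, e1⟩ := conjMulHasFDerivAt P P.derivative z
  obtain ⟨L2, hc2, e2⟩ := conjMulHasFDerivAt Q Q.derivative z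
  have hα : HasFDerivAt α (L1 + L2) z := hc1.add hc2
  obtain ⟨Lu, hLu, hLu1, hLuI⟩ := uHasFDerivAt P Q z
  have hN1 : HasFDerivAt (fun w => 2 * (α w).re)
      ((2:ℝ) • (Complex.reCLM.comp (L1 + L2))) z :=
    (Complex.reCLM.hasFDerivAt.comp z hα).const_mul 2
  have hN2 : HasFDerivAt (fun w => (-2) * (α w).im)
      ((-2:ℝ) • (Complex.imCLM.comp (L1 + L2))) z :=
    (Complex.imCLM.hasFDerivAt.comp z hα).const_mul (-2)
  have hinv : HasFDerivAt (fun w => (u w)⁻¹) ((-((u z)^2)⁻¹) • Lu) z :=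
    (hasDerivAt_inv h.ne').comp_hasFDerivAt z hLu
  have hp1 : HasFDerivAt (fun w => (u w)⁻¹ * (2 * (α w).re)) _ z := hinv.mul hN1
  have hp2 : HasFDerivAt (fun w => (u w)⁻¹ * ((-2) * (α w).im)) _ z := hinv.mul hN2
  have klap : lap ψ z
      = fderiv ℝ (fun w => (u w)⁻¹ * (2 * (α w).re)) z 1
      + fderiv ℝ (fun w => (u w)⁻¹ * ((-2) * (α w).im)) z Complex.I := by
    rw [lap, h1.fderiv_eq, h2.fderiv_eq]
  rw [klap, hp1.fderiv, hp2.fderiv]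
  simp only [ContinuousLinearMap.add_apply, ContinuousLinearMap.smul_apply,
    ContinuousLinearMap.comp_apply, ContinuousLinearMap.coe_smul', Pi.smul_apply,
    Complex.reCLM_apply, Complex.imCLM_apply, smul_eq_mul, e1, e2, hLu1, hLuI, hαdef, hudef]
  set a := P.eval z; set b := P.derivative.eval z; set c := P.derivative.derivative.eval z
  set a2 := Q.eval z; set b2 := Q.derivative.eval z; set c2 := Q.derivative.derivative.eval z
  have hne : Complex.normSq a + Complex.normSq a2 ≠ 0 := by
    simpa [Complex.sq_norm] using h.ne'
  simp only [Complex.sq_norm, map_one, mul_one]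
  field_simp [hne]
  simp only [Complex.normSq_apply, Complex.mul_re, Complex.mul_im, Complex.conj_re,
    Complex.conj_im, Complex.add_re, Complex.add_im, Complex.sub_re, Complex.sub_im,
    Complex.I_re, Complex.I_im, Complex.one_re, Complex.one_im]
  ring
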